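/- For all integers L ≥ 2 and N ≥ m ≥ 1, the total canonical weight of configurations whose maximal occupation equals exactly m is sandwiched as follows: L·w(m)·Q(L−1, N−m, m−1) ≤ Q(L,N,m) − Q(L,N,m−1) ≤ L·w(m)·Q(L−1, N−m, m). -/

import Mathlib

open Filter Topology

/-- Zero-range jump rates: `g 0 = 0`, `g n = 1 + b / n ^ γ` for `n ≥ 1`. -/
noncomputable def zrpG (b γ : ℝ) (n : ℕ) : ℝ := if n = 0 then 0 else 1 + b / (n : ℝ) ^ γ

/-- Stationary weights: `w 0 = 1`, `w n = ∏_{k=1}^n 1 / g k`. -/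
noncomputable def zrpW (b γ : ℝ) (n : ℕ) : ℝ := ∏ k ∈ Finset.Icc 1 n, (zrpG b γ k)⁻¹

/-- Single-site partition function `z φ = Σ_{k≥0} w k · φ^k`. -/
noncomputable def zrpZfun (b γ φ : ℝ) : ℝ := ∑' k : ℕ, zrpW b γ k * φ ^ k

/-- Critical density `ρ_c = (Σ k·w k) / z 1`. -/
noncomputable def zrpRhoC (b γ : ℝ) : ℝ :=
  (∑' k : ℕ, (k : ℝ) * zrpW b γ k) / (∑' k : ℕ, zrpW b γ k)

/-- Critical variance `σ_c² = (Σ k²·w k) / z 1 − ρ_c²`. -/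
noncomputable def zrpSigmaSq (b γ : ℝ) : ℝ :=
  (∑' k : ℕ, (k : ℝ) ^ 2 * zrpW b γ k) / (∑' k : ℕ, zrpW b γ k) - (zrpRhoC b γ) ^ 2

/-- Truncated partition function `z_m(φ) = Σ_{k=0}^m w k · φ^k`. -/
noncomputable def zrpZtrunc (b γ : ℝ) (m : ℕ) (φ : ℝ) : ℝ :=
  ∑ k ∈ Finset.range (m + 1), zrpW b γ k * φ ^ k

/-- Truncated density function `R_m(φ) = (Σ_{k=0}^m k·w k·φ^k) / z_m(φ)`. -/
noncomputable def zrpRtrunc (b γ : ℝ) (m : ℕ) (φ : ℝ) : ℝ :=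
  (∑ k ∈ Finset.range (m + 1), (k : ℝ) * zrpW b γ k * φ ^ k) / zrpZtrunc b γ m φ

/-- Canonical partition function `Z(L,N) = Σ_{η : Fin L → ℕ, Σ η = N} ∏ w (η x)`. -/
noncomputable def zrpZc (b γ : ℝ) (L N : ℕ) : ℝ :=
  ∑ η ∈ (Fintype.piFinset fun _ : Fin L => Finset.range (N + 1)).filter
      (fun η => ∑ x, η x = N),
    ∏ x, zrpW b γ (η x)

/-- Cut-off canonical partition function, restricting to `η x ≤ m` for all `x`. -/
noncomputable def zrpQc (b γ : ℝ) (L N m : ℕ) : ℝ :=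
  ∑ η ∈ (Fintype.piFinset fun _ : Fin L => Finset.range (N + 1)).filter
      (fun η => ∑ x, η x = N ∧ ∀ x, η x ≤ m),
    ∏ x, zrpW b γ (η x)

/-- Finite-size rate function `I_{L,N}(m)`. -/
noncomputable def zrpI (b γ : ℝ) (L N m : ℕ) : ℝ :=
  -(1 / (L : ℝ)) * Real.log ((zrpQc b γ L N m - zrpQc b γ L N (m - 1)) / zrpZc b γ L N)

lemma zrpW_pos {b γ : ℝ} (hb : 0 < b) (n : ℕ) : 0 < zrpW b γ n := by
  unfold zrpW
  apply Finset.prod_pos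
  intro k hk
  rw [Finset.mem_Icc] at hk
  have hk0 : k ≠ 0 := by omega
  rw [zrpG, if_neg hk0]
  have : (0:ℝ) < (k:ℝ) ^ γ := Real.rpow_pos_of_pos (by exact_mod_cast Nat.pos_of_ne_zero hk0) γ
  positivity

lemma sum_le_sum_inj {α β : Type*} {s : Finset α} {t : Finset β} (e : α → β)
    (hinj : Set.InjOn e s) (hmap : ∀ a ∈ s, e a ∈ t) (f : α → ℝ) (g : β → ℝ)
    (hfg : ∀ a ∈ s, f a = g (e a)) (hg : ∀ x ∈ t, 0 ≤ g x) :
    ∑ a ∈ s, f a ≤ ∑ x ∈ t, g x := by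
  classical
  calc ∑ a ∈ s, f a = ∑ a ∈ s, g (e a) := Finset.sum_congr rfl hfg
    _ = ∑ x ∈ s.image e, g x :=
        (Finset.sum_image (fun a ha a' ha' h => hinj ha ha' h)).symm
    _ ≤ ∑ x ∈ t, g x :=
        Finset.sum_le_sum_of_subset_of_nonneg (Finset.image_subset_iff.2 hmap)
          (fun x hx _ => hg x hx)

/-- For `L ≥ 2` and `N ≥ m ≥ 1`, the total canonical weight of configurations
whose maximal occupation equals exactly `m` is sandwiched:
`L·w(m)·Q(L−1, N−m, m−1) ≤ Q(L,N,m) − Q(L,N,m−1) ≤ L·w(m)·Q(L−1, N−m, m)`. -/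
theorem max_occupation_sandwich (b γ : ℝ) (hγ0 : 0 < γ) (hγ1 : γ < 1) (hb : 0 < b)
    (L N m : ℕ) (hL : 2 ≤ L) (hm : 1 ≤ m) (hmN : m ≤ N) :
    (L : ℝ) * zrpW b γ m * zrpQc b γ (L - 1) (N - m) (m - 1) ≤
      zrpQc b γ L N m - zrpQc b γ L N (m - 1) ∧
    zrpQc b γ L N m - zrpQc b γ L N (m - 1) ≤
      (L : ℝ) * zrpW b γ m * zrpQc b γ (L - 1) (N - m) m := by
  classical
  obtain ⟨L', rfl⟩ : ∃ L', L = L' + 1 := ⟨L - 1, by omega⟩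
  set W : ℕ → ℝ := zrpW b γ with hWdef
  have hW : ∀ n, 0 < W n := fun n => zrpW_pos hb n
  -- the cut-off sets
  set A : ℕ → Finset (Fin (L' + 1) → ℕ) := fun c =>
    (Fintype.piFinset fun _ : Fin (L' + 1) => Finset.range (N + 1)).filter
      (fun η => ∑ x, η x = N ∧ ∀ x, η x ≤ c) with hA
  set B : ℕ → Finset (Fin L' → ℕ) := fun c =>
    (Fintype.piFinset fun _ : Fin L' => Finset.range (N - m + 1)).filter
      (fun η => ∑ x, η x = N - m ∧ ∀ x, η x ≤ c) with hB
  have hQ : ∀ c, zrpQc b γ (L' + 1) N c = ∑ η ∈ A c, ∏ x, W (η x) := fun c => rfl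
  have hQ' : ∀ c, zrpQc b γ (L' + 1 - 1) (N - m) c = ∑ ζ ∈ B c, ∏ x, W (ζ x) := fun c => rfl
  -- membership in A
  have memA : ∀ c η, η ∈ A c ↔ ((∀ x, η x ≤ N) ∧ ∑ x, η x = N ∧ ∀ x, η x ≤ c) := by
    intro c η
    simp [hA, Fintype.mem_piFinset, Finset.mem_range, Nat.lt_succ_iff]
  have memB : ∀ c ζ, ζ ∈ B c ↔ ((∀ x, ζ x ≤ N - m) ∧ ∑ x, ζ x = N - m ∧ ∀ x, ζ x ≤ c) := by
    intro c ζ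
    simp [hB, Fintype.mem_piFinset, Finset.mem_range, Nat.lt_succ_iff]
  have hsub : A (m - 1) ⊆ A m := by
    intro η hη
    rw [memA] at hη ⊢
    exact ⟨hη.1, hη.2.1, fun x => le_trans (hη.2.2 x) (by omega)⟩
  -- the difference is the sum over the sdiff
  have hdiff : zrpQc b γ (L' + 1) N m - zrpQc b γ (L' + 1) N (m - 1)
      = ∑ η ∈ A m \ A (m - 1), ∏ x, W (η x) := by
    rw [hQ, hQ, ← Finset.sum_sdiff hsub]; ring
  -- characterization of the sdiff
  have memD : ∀ η, η ∈ A m \ A (m - 1) →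
      ((∀ x, η x ≤ N) ∧ (∑ x, η x = N) ∧ (∀ x, η x ≤ m) ∧ ∃ x, η x = m) := by
    intro η hη
    rw [Finset.mem_sdiff, memA, memA] at hη
    obtain ⟨⟨h1, h2, h3⟩, h4⟩ := hη
    refine ⟨h1, h2, h3, ?_⟩
    by_contra hcon
    push_neg at hcon
    exact h4 ⟨h1, h2, fun x => by have := h3 x; have := hcon x; omega⟩
  -- sums over pairs
  have hpair : ∀ c, ∑ p ∈ (Finset.univ ×ˢ B c : Finset (Fin (L' + 1) × (Fin L' → ℕ))),
      (W m * ∏ x, W (p.2 x)) = ((L' + 1 : ℕ) : ℝ) * W m * ∑ ζ ∈ B c, ∏ x, W (ζ x) := by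
    intro c
    rw [Finset.sum_product]
    dsimp only
    rw [Finset.sum_const, Finset.card_univ, Fintype.card_fin, nsmul_eq_mul]
    conv_rhs => rw [mul_assoc, Finset.mul_sum]
  constructor
  · -- lower bound
    rw [hdiff, show ((L' + 1 : ℕ) : ℝ) * zrpW b γ m * zrpQc b γ (L' + 1 - 1) (N - m) (m - 1)
        = ∑ p ∈ (Finset.univ ×ˢ B (m - 1) : Finset (Fin (L' + 1) × (Fin L' → ℕ))),
          (W m * ∏ x, W (p.2 x)) from by rw [hpair, hQ']]
    apply sum_le_sum_inj (fun p => p.1.insertNth m p.2)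
    · -- injectivity
      intro p hp p' hp' he
      replace he : (p.1.insertNth m p.2 : Fin (L' + 1) → ℕ)
          = (p'.1.insertNth m p'.2 : Fin (L' + 1) → ℕ) := he
      simp only [Finset.coe_product, Set.mem_prod, Finset.mem_coe] at hp hp'
      have hple := ((memB _ _).1 hp.2).2.2
      have hple' := ((memB _ _).1 hp'.2).2.2
      have h1 : p.1 = p'.1 := by
        by_contra hne
        obtain ⟨j, hj⟩ := Fin.exists_succAbove_eq hne
        have : m = p'.2 j := by
          have := congrFun he p.1
          rwa [Fin.insertNth_apply_same, ← hj, Fin.insertNth_apply_succAbove] at this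
        have := hple' j
        omega
      have h2 : p.2 = p'.2 := by
        funext j
        have := congrFun he (p.1.succAbove j)
        rw [Fin.insertNth_apply_succAbove, h1, Fin.insertNth_apply_succAbove] at this
        exact this
      exact Prod.ext h1 h2
    · -- maps into the sdiff
      intro p hp
      rw [Finset.mem_product, memB] at hp
      obtain ⟨-, hbd, hsum, hle⟩ := hp
      have happ : ∀ x, (p.1.insertNth m p.2 : Fin (L' + 1) → ℕ) x = m ∨
          ∃ j, (p.1.insertNth m p.2 : Fin (L' + 1) → ℕ) x = p.2 j := by
        intro x
        rcases eq_or_ne x p.1 with h | h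
        · left; rw [h, Fin.insertNth_apply_same]
        · obtain ⟨j, hj⟩ := Fin.exists_succAbove_eq h
          right; exact ⟨j, by rw [← hj, Fin.insertNth_apply_succAbove]⟩
      have hsum' : ∑ x, (p.1.insertNth m p.2 : Fin (L' + 1) → ℕ) x = N := by
        rw [Fin.sum_univ_succAbove _ p.1, Fin.insertNth_apply_same]
        have : ∑ j, (p.1.insertNth m p.2 : Fin (L' + 1) → ℕ) (p.1.succAbove j) = ∑ j, p.2 j :=
          Finset.sum_congr rfl fun j _ =>
            Fin.insertNth_apply_succAbove (α := fun _ => ℕ) p.1 m p.2 j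
        rw [this, hsum]; omega
      rw [Finset.mem_sdiff, memA, memA]
      refine ⟨⟨?_, hsum', ?_⟩, ?_⟩
      · intro x
        rcases happ x with h | ⟨j, h⟩
        · omega
        · rw [h]; have := hbd j; omega
      · intro x
        rcases happ x with h | ⟨j, h⟩
        · omega
        · rw [h]; have := hle j; omega
      · rintro ⟨-, -, hc⟩
        have := hc p.1
        rw [Fin.insertNth_apply_same] at this
        omega
    · -- values match
      intro p hp
      rw [Fin.prod_univ_succAbove
        (fun x => W ((p.1.insertNth m p.2 : Fin (L' + 1) → ℕ) x)) p.1]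
      rw [Fin.insertNth_apply_same]
      congr 1
      exact Finset.prod_congr rfl fun j _ => by
        rw [Fin.insertNth_apply_succAbove]
    · intro η hη
      exact le_of_lt (Finset.prod_pos fun x _ => hW _)
  · -- upper bound
    rw [hdiff, show ((L' + 1 : ℕ) : ℝ) * zrpW b γ m * zrpQc b γ (L' + 1 - 1) (N - m) m
        = ∑ p ∈ (Finset.univ ×ˢ B m : Finset (Fin (L' + 1) × (Fin L' → ℕ))),
          (W m * ∏ x, W (p.2 x)) from by rw [hpair, hQ']]
    set idx : (Fin (L' + 1) → ℕ) → Fin (L' + 1) := fun η =>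
      if h : ∃ x, η x = m then h.choose else 0 with hidx
    have hidxval : ∀ η : Fin (L' + 1) → ℕ, (∃ x, η x = m) → η (idx η) = m := by
      intro η h
      have : idx η = h.choose := by simp only [hidx]; rw [dif_pos h]
      rw [this]
      exact h.choose_spec
    apply sum_le_sum_inj (fun η => (idx η, fun j => η ((idx η).succAbove j)))
    · -- injectivity
      intro η hη η' hη' he
      replace he : (idx η, fun j => η ((idx η).succAbove j))
          = (idx η', fun j => η' ((idx η').succAbove j)) := he
      rw [Finset.mem_coe] at hη hη'
      obtain ⟨-, -, -, hex⟩ := memD η hη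
      obtain ⟨-, -, -, hex'⟩ := memD η' hη'
      have h1 : idx η = idx η' := congrArg Prod.fst he
      have h2 : ∀ j, η ((idx η).succAbove j) = η' ((idx η).succAbove j) := by
        intro j
        have := congrFun (congrArg Prod.snd he) j
        simp only at this
        rw [this, h1]
      funext x
      rcases eq_or_ne x (idx η) with h | h
      · rw [h, hidxval η hex, h1, hidxval η' hex']
      · obtain ⟨j, hj⟩ := Fin.exists_succAbove_eq h
        rw [← hj]; exact h2 j
    · -- maps into pairs
      intro η hη
      obtain ⟨hN, hsum, hle, hex⟩ := memD η hη
      have hval : η (idx η) = m := hidxval η hex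
      have hsum2 : ∑ j, η ((idx η).succAbove j) = N - m := by
        have := Fin.sum_univ_succAbove (fun x => η x) (idx η)
        rw [hsum, hval] at this
        omega
      rw [Finset.mem_product, memB]
      refine ⟨Finset.mem_univ _, ?_, hsum2, fun j => hle _⟩
      intro j
      calc η ((idx η).succAbove j) ≤ ∑ j', η ((idx η).succAbove j') :=
            Finset.single_le_sum (f := fun j' => η ((idx η).succAbove j'))
              (fun j' _ => Nat.zero_le _) (Finset.mem_univ j)
        _ = N - m := hsum2
    · -- values match
      intro η hη
      obtain ⟨-, -, -, hex⟩ := memD η hη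
      rw [Fin.prod_univ_succAbove (fun x => W (η x)) (idx η), hidxval η hex]
    · intro p hp
      exact le_of_lt (mul_pos (hW _) (Finset.prod_pos fun x _ => hW _))
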